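/- Let α_i > 0 (i = 1,…,s) and β > 0, let ℳ = {M_0, M_1, M_2} be a triple of (n+m) × (n+m) matrices, and suppose T_ℳ is well-defined. Then T_ℳ is weakly firmly nonexpansive with respect to ℳ. -/

import Mathlib

open Matrix Filter Topology

noncomputable section

/-- Spectral norm (largest singular value) of a real matrix. -/
def specNorm {p q : Type*} [Fintype p] [Fintype q] [DecidableEq q]
    (M : Matrix p q ℝ) : ℝ :=
  ‖LinearMap.toContinuousLinearMap (Matrix.toEuclideanLin M)‖

/-- The positive semidefinite square root of a positive semidefinite matrix (the definition
`Matrix.PosSemidef.sqrt` of the older Mathlib, which has since been removed). -/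
def Matrix.PosSemidef.sqrt {n : Type*} [Fintype n] [DecidableEq n]
    {A : Matrix n n ℝ} (hA : A.PosSemidef) : Matrix n n ℝ :=
  hA.1.eigenvectorUnitary.1 * diagonal ((√·) ∘ hA.1.eigenvalues) *
  (star hA.1.eigenvectorUnitary : Matrix n n ℝ)

/-- Condition-M for a triple of matrices: `M0 = M1 + M2`, `H := M0 + M2` is symmetric
positive definite, and `‖H^{-1/2} M2 H^{-1/2}‖₂ < 1/2` (here `H^{-1/2}` is the positive
semidefinite square root of `H⁻¹`). -/
def ConditionM {d : Type*} [Fintype d] [DecidableEq d] (M0 M1 M2 : Matrix d d ℝ) : Prop :=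
  M0 = M1 + M2 ∧ ∃ hH : (M0 + M2).PosDef,
    specNorm (hH.inv.posSemidef.sqrt * M2 * hH.inv.posSemidef.sqrt) < 1 / 2

/-- The cost functional defining the proximity operator `prox_{φ,H}` at input `x`. -/
def proxCost {ι : Type*} [Fintype ι] (φ : (ι → ℝ) → EReal) (H : Matrix ι ι ℝ)
    (x u : ι → ℝ) : EReal :=
  ((((1 : ℝ) / 2) * ((u - x) ⬝ᵥ H.mulVec (u - x)) : ℝ) : EReal) + φ u

/-- `p = prox_{φ,H}(x)`: `p` is the unique minimizer of the prox cost. -/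
def IsProx {ι : Type*} [Fintype ι] (φ : (ι → ℝ) → EReal) (H : Matrix ι ι ℝ)
    (x p : ι → ℝ) : Prop :=
  (∀ u, proxCost φ H x p ≤ proxCost φ H x u) ∧
  ∀ q, (∀ u, proxCost φ H x q ≤ proxCost φ H x u) → q = p

/-- Proper lower semicontinuous convex extended-real-valued function. -/
def ProperConvexLsc {ι : Type*} [Fintype ι] (f : (ι → ℝ) → EReal) : Prop :=
  (∃ x, f x ≠ ⊤) ∧ (∀ x, f x ≠ ⊥) ∧ LowerSemicontinuous f ∧
  ∀ x y : ι → ℝ, ∀ t : ℝ, 0 < t → t < 1 →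
    f (t • x + (1 - t) • y) ≤ (t : EReal) * f x + ((1 - t : ℝ) : EReal) * f y

/-- Scaling of an extended-real-valued function by a real constant. -/
def smulF {V : Type*} (c : ℝ) (φ : V → EReal) : V → EReal := fun u => (c : EReal) * φ u

/-- The conjugate of the indicator of `C = {b}`: `ι_C*(y) = ⟨y, b⟩`. -/
def iotaCstar {m : ℕ} (b : Fin m → ℝ) : (Fin m → ℝ) → EReal :=
  fun y => ((y ⬝ᵥ b : ℝ) : EReal)

variable {s m : ℕ} {n : Fin s → ℕ}

/-- Index type for the concatenated variable `x = (x_1, …, x_s)`. -/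
abbrev XIdx (n : Fin s → ℕ) := (i : Fin s) × Fin (n i)

/-- Index type for the full variable `v = (x, y)`. -/
abbrev FIdx (n : Fin s → ℕ) (m : ℕ) := XIdx n ⊕ Fin m

/-- The `i`-th block of a concatenated vector. -/
def blk (x : XIdx n → ℝ) (i : Fin s) : Fin (n i) → ℝ := fun j => x ⟨i, j⟩

/-- The matrix `A = [A_1 … A_s]`. -/
def bigA (A : ∀ i : Fin s, Matrix (Fin m) (Fin (n i)) ℝ) : Matrix (Fin m) (XIdx n) ℝ :=
  Matrix.of fun r p => A p.1 r p.2

/-- The separable objective `∑ f_i(x_i)`. -/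
def objSum (f : ∀ i : Fin s, (Fin (n i) → ℝ) → EReal) (x : XIdx n → ℝ) : EReal :=
  ∑ i, f i (blk x i)

/-- `∑ A_i x_i`. -/
def sumAx (A : ∀ i : Fin s, Matrix (Fin m) (Fin (n i)) ℝ) (x : XIdx n → ℝ) : Fin m → ℝ :=
  ∑ i, (A i).mulVec (blk x i)

/-- `x` is a solution of problem (P). -/
def IsSolution (f : ∀ i : Fin s, (Fin (n i) → ℝ) → EReal)
    (A : ∀ i : Fin s, Matrix (Fin m) (Fin (n i)) ℝ) (b : Fin m → ℝ)
    (x : XIdx n → ℝ) : Prop :=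
  sumAx A x = b ∧ ∀ z : XIdx n → ℝ, sumAx A z = b → objSum f x ≤ objSum f z

/-- `b ∈ A(ri(dom(∑ f_i)))` where `ri` is the relative (intrinsic) interior. -/
def RiCond (f : ∀ i : Fin s, (Fin (n i) → ℝ) → EReal)
    (A : ∀ i : Fin s, Matrix (Fin m) (Fin (n i)) ℝ) (b : Fin m → ℝ) : Prop :=
  b ∈ (fun x => sumAx A x) '' intrinsicInterior ℝ {x : XIdx n → ℝ | objSum f x ≠ ⊤}

/-- The `x`-part of a full vector. -/
def xpart (v : FIdx n m → ℝ) : XIdx n → ℝ := fun p => v (Sum.inl p)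

/-- The `y`-part of a full vector. -/
def ypart (v : FIdx n m → ℝ) : Fin m → ℝ := fun r => v (Sum.inr r)

/-- The function `Φ(x_1,…,x_s,y) = ∑ f_i(x_i) + ι_C*(y)`. -/
def PhiFun (f : ∀ i : Fin s, (Fin (n i) → ℝ) → EReal) (b : Fin m → ℝ)
    (v : FIdx n m → ℝ) : EReal :=
  objSum f (xpart v) + iotaCstar b (ypart v)

/-- The diagonal matrix `R = diag((β/α_1)I, …, (β/α_s)I, (1/β)I)`. -/
def Rmat (α : Fin s → ℝ) (β : ℝ) : Matrix (FIdx n m) (FIdx n m) ℝ :=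
  Matrix.diagonal (Sum.elim (fun p : XIdx n => β / α p.1) fun _ => 1 / β)

/-- The inverse `R⁻¹` of the diagonal matrix `R`. -/
def Rinv (α : Fin s → ℝ) (β : ℝ) : Matrix (FIdx n m) (FIdx n m) ℝ :=
  Matrix.diagonal (Sum.elim (fun p : XIdx n => α p.1 / β) fun _ => β)

/-- The expansive matrix `E = [[I, −P⁻¹Aᵀ],[βA, I]]`. -/
def Emat (A : ∀ i : Fin s, Matrix (Fin m) (Fin (n i)) ℝ) (α : Fin s → ℝ) (β : ℝ) :
    Matrix (FIdx n m) (FIdx n m) ℝ :=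
  Matrix.fromBlocks 1 (-(Matrix.diagonal (fun p : XIdx n => α p.1 / β) * (bigA A)ᵀ))
    (β • bigA A) 1

/-- The skew-symmetric matrix `S_A = [[0, −Aᵀ],[A, 0]]`. -/
def SAmat (A : ∀ i : Fin s, Matrix (Fin m) (Fin (n i)) ℝ) :
    Matrix (FIdx n m) (FIdx n m) ℝ :=
  Matrix.fromBlocks 0 (-(bigA A)ᵀ) (bigA A) 0

/-- `w = 𝒯(v)`, where `𝒯(x_1,…,x_s,y) = (prox_{(α_1/β)f_1}x_1, …, prox_{(α_s/β)f_s}x_s,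
prox_{β ι_C*}y)`. -/
def isT (f : ∀ i : Fin s, (Fin (n i) → ℝ) → EReal) (b : Fin m → ℝ)
    (α : Fin s → ℝ) (β : ℝ) (v w : FIdx n m → ℝ) : Prop :=
  (∀ i, IsProx (smulF (α i / β) (f i)) 1 (blk (xpart v) i) (blk (xpart w) i)) ∧
  IsProx (smulF β (iotaCstar b)) 1 (ypart v) (ypart w)

/-- `w = T_ℳ(u₁, u₂)`, i.e. `w = 𝒯((E − R⁻¹M₀)w + R⁻¹M₁u₁ + R⁻¹M₂u₂)`. -/
def isTM (f : ∀ i : Fin s, (Fin (n i) → ℝ) → EReal)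
    (A : ∀ i : Fin s, Matrix (Fin m) (Fin (n i)) ℝ) (b : Fin m → ℝ)
    (α : Fin s → ℝ) (β : ℝ) (M0 M1 M2 : Matrix (FIdx n m) (FIdx n m) ℝ)
    (u1 u2 w : FIdx n m → ℝ) : Prop :=
  isT f b α β ((Emat A α β - Rinv α β * M0).mulVec w + (Rinv α β * M1).mulVec u1
    + (Rinv α β * M2).mulVec u2) w

/-- `T_ℳ` is well-defined. -/
def TMWellDefined (f : ∀ i : Fin s, (Fin (n i) → ℝ) → EReal)
    (A : ∀ i : Fin s, Matrix (Fin m) (Fin (n i)) ℝ) (b : Fin m → ℝ)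
    (α : Fin s → ℝ) (β : ℝ) (M0 M1 M2 : Matrix (FIdx n m) (FIdx n m) ℝ) : Prop :=
  ∀ u1 u2 : FIdx n m → ℝ, ∃! w, isTM f A b α β M0 M1 M2 u1 u2 w



section AuxProx
variable {ι : Type*} [Fintype ι] [DecidableEq ι]

omit [DecidableEq ι] in
lemma sub_dot_sub (a b c d : ι → ℝ) :
    (a - b) ⬝ᵥ (c - d) = a ⬝ᵥ c - a ⬝ᵥ d - b ⬝ᵥ c + b ⬝ᵥ d := by
  simp [sub_dotProduct, dotProduct_sub]; ring

omit [DecidableEq ι] in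
lemma dot_self_nonneg (a : ι → ℝ) : 0 ≤ a ⬝ᵥ a :=
  Finset.sum_nonneg fun _ _ => mul_self_nonneg _

omit [DecidableEq ι] in
lemma dot_expand (u v : ι → ℝ) (t : ℝ) :
    ((u + t • v) ⬝ᵥ (u + t • v)) = u ⬝ᵥ u + 2 * t * (u ⬝ᵥ v) + t ^ 2 * (v ⬝ᵥ v) := by
  simp [add_dotProduct, dotProduct_add, smul_dotProduct,
    dotProduct_smul, smul_eq_mul, dotProduct_comm v u]
  ring

omit [DecidableEq ι] in
lemma skew_dot {S : Matrix ι ι ℝ} (h : Sᵀ = -S) (v : ι → ℝ) : v ⬝ᵥ S.mulVec v = 0 := by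
  have h2 : v ᵥ* S = -(S *ᵥ v) := by
    conv_lhs => rw [← Matrix.transpose_transpose S]
    rw [Matrix.vecMul_transpose, h, Matrix.neg_mulVec]
  have h1 := Matrix.dotProduct_mulVec v S v
  rw [h2, neg_dotProduct, dotProduct_comm (S *ᵥ v) v] at h1
  linarith

lemma prox_val_ne_top {φ : (ι → ℝ) → EReal} (hbot : ∀ x, φ x ≠ ⊥)
    (hne : ∃ u, φ u ≠ ⊤) {x p : ι → ℝ}
    (hp : ∀ u, proxCost φ 1 x p ≤ proxCost φ 1 x u) : φ p ≠ ⊤ := by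
  obtain ⟨u0, hu0⟩ := hne
  have h := hp u0
  intro htop
  rw [proxCost, proxCost, htop, ← EReal.coe_toReal hu0 (hbot u0), ← EReal.coe_add,
    EReal.add_top_of_ne_bot (EReal.coe_ne_bot _)] at h
  exact (EReal.coe_ne_top _) (top_le_iff.mp h)

lemma prox_subgrad {φ : (ι → ℝ) → EReal} (hbot : ∀ x, φ x ≠ ⊥)
    (hconv : ∀ x y : ι → ℝ, ∀ t : ℝ, 0 < t → t < 1 →
      φ (t • x + (1 - t) • y) ≤ (t : EReal) * φ x + ((1 - t : ℝ) : EReal) * φ y)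
    {x p q : ι → ℝ} (hp : ∀ u, proxCost φ 1 x p ≤ proxCost φ 1 x u)
    (hfp : φ p ≠ ⊤) (hfq : φ q ≠ ⊤) :
    (φ p).toReal + (x - p) ⬝ᵥ (q - p) ≤ (φ q).toReal := by
  set bp := (φ p).toReal with hbp
  set bq := (φ q).toReal with hbq
  have hφp : φ p = ((bp : ℝ) : EReal) := (EReal.coe_toReal hfp (hbot p)).symm
  have hφq : φ q = ((bq : ℝ) : EReal) := (EReal.coe_toReal hfq (hbot q)).symm
  have hDpos : 0 ≤ (q - p) ⬝ᵥ (q - p) := dot_self_nonneg _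
  have key : ∀ t : ℝ, 0 < t → t < 1 →
      t * (bp - bq - (p - x) ⬝ᵥ (q - p)) ≤ t ^ 2 / 2 * ((q - p) ⬝ᵥ (q - p)) := by
    intro t ht0 ht1
    have hcost := hp (t • q + (1 - t) • p)
    simp only [proxCost, Matrix.one_mulVec] at hcost
    have hcv := hconv q p t ht0 ht1
    rw [hφq, hφp, ← EReal.coe_mul, ← EReal.coe_mul, ← EReal.coe_add] at hcv
    have h2 := le_trans hcost (add_le_add_right hcv _)
    rw [hφp, ← EReal.coe_add, ← EReal.coe_add] at h2
    have hreal := EReal.coe_le_coe_iff.mp h2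
    have hmid : t • q + (1 - t) • p - x = (p - x) + t • (q - p) := by
      funext k; simp; ring
    rw [hmid, dot_expand (p - x) (q - p) t] at hreal
    nlinarith [hreal]
  by_contra hcon
  push_neg at hcon
  have hxB : (x - p) ⬝ᵥ (q - p) = -((p - x) ⬝ᵥ (q - p)) := by
    rw [sub_dot_sub, sub_dot_sub]; ring
  rw [hxB] at hcon
  set B := (p - x) ⬝ᵥ (q - p) with hB
  set D := (q - p) ⬝ᵥ (q - p) with hD
  set a := bp - bq - B with ha
  have ha0 : 0 < a := by rw [ha]; linarith
  have h12 := key (1 / 2) (by norm_num) (by norm_num)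
  have hD0 : 0 < D := by nlinarith
  set t0 := min (1 / 2 : ℝ) (a / D) with ht0def
  have ht0 : 0 < t0 := lt_min (by norm_num) (div_pos ha0 hD0)
  have ht1 : t0 < 1 := lt_of_le_of_lt (min_le_left _ _) (by norm_num)
  have hk := key t0 ht0 ht1
  have hta : t0 * D ≤ a := (le_div_iff₀ hD0).mp (min_le_right _ _)
  nlinarith [hk, hta, mul_pos ht0 ha0, mul_le_mul_of_nonneg_left hta (le_of_lt ht0)]

lemma prox_firm {φ : (ι → ℝ) → EReal} (hbot : ∀ x, φ x ≠ ⊥)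
    (hconv : ∀ x y : ι → ℝ, ∀ t : ℝ, 0 < t → t < 1 →
      φ (t • x + (1 - t) • y) ≤ (t : EReal) * φ x + ((1 - t : ℝ) : EReal) * φ y)
    (hne : ∃ u, φ u ≠ ⊤)
    {x1 p1 x2 p2 : ι → ℝ} (h1 : IsProx φ 1 x1 p1) (h2 : IsProx φ 1 x2 p2) :
    (p2 - p1) ⬝ᵥ (p2 - p1) ≤ (p2 - p1) ⬝ᵥ (x2 - x1) := by
  have hf1 : φ p1 ≠ ⊤ := prox_val_ne_top hbot hne h1.1
  have hf2 : φ p2 ≠ ⊤ := prox_val_ne_top hbot hne h2.1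
  have s1 := prox_subgrad hbot hconv h1.1 hf1 hf2
  have s2 := prox_subgrad hbot hconv h2.1 hf2 hf1
  rw [sub_dot_sub] at s1 s2 ⊢
  rw [sub_dot_sub]
  linarith [dotProduct_comm p1 p2, dotProduct_comm x1 p1,
    dotProduct_comm x1 p2, dotProduct_comm x2 p1,
    dotProduct_comm x2 p2]

end AuxProx

lemma pos_mul_ne_bot {t : ℝ} (ht : 0 < t) {a : EReal} (ha : a ≠ ⊥) : (t : EReal) * a ≠ ⊥ := by
  rcases eq_or_ne a ⊤ with h | h
  · simp [h, EReal.coe_mul_top_of_pos ht]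
  · rw [← EReal.coe_toReal h ha, ← EReal.coe_mul]; exact EReal.coe_ne_bot _

section AuxSmul
variable {ι : Type*} [Fintype ι]

omit [Fintype ι] in
lemma smulF_ne_bot {f : (ι → ℝ) → EReal} {c : ℝ} (hc : 0 < c) (hbot : ∀ x, f x ≠ ⊥) :
    ∀ x, smulF c f x ≠ ⊥ := fun x => pos_mul_ne_bot hc (hbot x)

omit [Fintype ι] in
lemma smulF_ne_top {f : (ι → ℝ) → EReal} (c : ℝ) (hbot : ∀ x, f x ≠ ⊥)
    (hne : ∃ u, f u ≠ ⊤) : ∃ u, smulF c f u ≠ ⊤ := by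
  obtain ⟨u, hu⟩ := hne
  refine ⟨u, ?_⟩
  rw [smulF, ← EReal.coe_toReal hu (hbot u), ← EReal.coe_mul]
  exact EReal.coe_ne_top _

lemma smulF_conv {f : (ι → ℝ) → EReal} (hf : ProperConvexLsc f) {c : ℝ} (hc : 0 < c) :
    ∀ x y : ι → ℝ, ∀ t : ℝ, 0 < t → t < 1 →
      smulF c f (t • x + (1 - t) • y) ≤
        (t : EReal) * smulF c f x + ((1 - t : ℝ) : EReal) * smulF c f y := by
  intro x y t ht0 ht1
  have h1t : (0 : ℝ) < 1 - t := by linarith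
  obtain ⟨-, hbot, -, hconv⟩ := hf
  rcases eq_or_ne (f x) ⊤ with hx | hx
  · have hT : (t : EReal) * smulF c f x = ⊤ := by
      rw [smulF, hx, EReal.coe_mul_top_of_pos hc, EReal.coe_mul_top_of_pos ht0]
    rw [hT, EReal.top_add_of_ne_bot (pos_mul_ne_bot h1t (smulF_ne_bot hc hbot y))]
    exact le_top
  rcases eq_or_ne (f y) ⊤ with hy | hy
  · have hT : ((1 - t : ℝ) : EReal) * smulF c f y = ⊤ := by
      rw [smulF, hy, EReal.coe_mul_top_of_pos hc, EReal.coe_mul_top_of_pos h1t]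
    rw [hT, EReal.add_top_of_ne_bot (pos_mul_ne_bot ht0 (smulF_ne_bot hc hbot x))]
    exact le_top
  · set rx := (f x).toReal with hrx
    set ry := (f y).toReal with hry
    have hfx : f x = ((rx : ℝ) : EReal) := (EReal.coe_toReal hx (hbot x)).symm
    have hfy : f y = ((ry : ℝ) : EReal) := (EReal.coe_toReal hy (hbot y)).symm
    have hm := hconv x y t ht0 ht1
    rw [hfx, hfy, ← EReal.coe_mul, ← EReal.coe_mul, ← EReal.coe_add] at hm
    have hmtop : f (t • x + (1 - t) • y) ≠ ⊤ :=
      fun h => by rw [h] at hm; exact (EReal.coe_ne_top _) (top_le_iff.mp hm)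
    have hmbot := hbot (t • x + (1 - t) • y)
    set rm := (f (t • x + (1 - t) • y)).toReal with hrm
    have hfm : f (t • x + (1 - t) • y) = ((rm : ℝ) : EReal) :=
      (EReal.coe_toReal hmtop hmbot).symm
    rw [hfm] at hm
    have hmle : rm ≤ t * rx + (1 - t) * ry := EReal.coe_le_coe_iff.mp hm
    simp only [smulF, hfm, hfx, hfy, ← EReal.coe_mul, ← EReal.coe_add]
    exact EReal.coe_le_coe_iff.mpr (by nlinarith)

end AuxSmul

lemma iota_conv {m : ℕ} (b : Fin m → ℝ) (β : ℝ) :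
    ∀ x y : Fin m → ℝ, ∀ t : ℝ, 0 < t → t < 1 →
      smulF β (iotaCstar b) (t • x + (1 - t) • y) ≤
        (t : EReal) * smulF β (iotaCstar b) x
          + ((1 - t : ℝ) : EReal) * smulF β (iotaCstar b) y := by
  intro x y t ht0 ht1
  simp only [smulF, iotaCstar, ← EReal.coe_mul, ← EReal.coe_add]
  refine EReal.coe_le_coe_iff.mpr (le_of_eq ?_)
  simp [add_dotProduct, smul_dotProduct, smul_eq_mul]
  ring

lemma iota_ne_bot {m : ℕ} (b : Fin m → ℝ) (β : ℝ) : ∀ y, smulF β (iotaCstar b) y ≠ ⊥ := by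
  intro y; rw [smulF, iotaCstar, ← EReal.coe_mul]; exact EReal.coe_ne_bot _

lemma iota_ne_top {m : ℕ} (b : Fin m → ℝ) (β : ℝ) : ∃ y, smulF β (iotaCstar b) y ≠ ⊤ :=
  ⟨0, by rw [smulF, iotaCstar, ← EReal.coe_mul]; exact EReal.coe_ne_top _⟩

lemma RR_one (α : Fin s → ℝ) (hα : ∀ i, 0 < α i) (β : ℝ) (hβ : 0 < β) :
    Rmat (n := n) (m := m) α β * Rinv α β = 1 := by
  rw [Rmat, Rinv, Matrix.diagonal_mul_diagonal]
  have hfun : (fun i : FIdx n m =>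
      (Sum.elim (fun p : XIdx n => β / α p.1) fun _ => 1 / β) i *
        (Sum.elim (fun p : XIdx n => α p.1 / β) fun _ => β) i) = fun _ => (1 : ℝ) := by
    funext idx
    rcases idx with p | r
    · have h1 : α p.fst ≠ 0 := (hα p.fst).ne'
      have h2 : β ≠ 0 := hβ.ne'
      simp only [Sum.elim_inl]
      field_simp
    · have h2 : β ≠ 0 := hβ.ne'
      simp only [Sum.elim_inr]
      field_simp
  rw [hfun, Matrix.diagonal_one]

lemma REmat (A : ∀ i : Fin s, Matrix (Fin m) (Fin (n i)) ℝ)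
    (α : Fin s → ℝ) (hα : ∀ i, 0 < α i) (β : ℝ) (hβ : 0 < β) :
    Rmat (n := n) (m := m) α β * (Emat A α β - 1) = SAmat A := by
  rw [Rmat]
  ext idx jdx
  rw [Matrix.diagonal_mul]
  have h2 : β ≠ 0 := hβ.ne'
  rcases idx with p | r <;> rcases jdx with q | r' <;>
    simp only [Sum.elim_inl, Sum.elim_inr, Matrix.sub_apply, Emat, SAmat,
      Matrix.fromBlocks_apply₁₁, Matrix.fromBlocks_apply₁₂, Matrix.fromBlocks_apply₂₁,
      Matrix.fromBlocks_apply₂₂, Matrix.one_apply, Matrix.neg_apply, Matrix.diagonal_mul,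
      Matrix.smul_apply, smul_eq_mul, Matrix.zero_apply, Sum.inl.injEq, Sum.inr.injEq,
      reduceCtorEq, if_false, sub_zero, sub_self, mul_zero]
  · have h1 : α p.fst ≠ 0 := (hα p.fst).ne'
    field_simp
  · field_simp

lemma SAskew (A : ∀ i : Fin s, Matrix (Fin m) (Fin (n i)) ℝ) :
    (SAmat (n := n) (m := m) A)ᵀ = -SAmat A := by
  rw [SAmat, Matrix.fromBlocks_transpose]
  ext idx jdx
  rcases idx with p | r <;> rcases jdx with q | r' <;> simp

lemma dot_R_mulVec (α : Fin s → ℝ) (β : ℝ) (e c : FIdx n m → ℝ) :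
    e ⬝ᵥ (Rmat α β).mulVec c
      = ∑ i, (β / α i) * ((fun j => e (Sum.inl ⟨i, j⟩)) ⬝ᵥ fun j => c (Sum.inl ⟨i, j⟩))
        + (1 / β) * ((fun r => e (Sum.inr r)) ⬝ᵥ fun r => c (Sum.inr r)) := by
  simp only [Rmat, dotProduct, Matrix.mulVec_diagonal]
  rw [Fintype.sum_sum_type]
  congr 1
  · rw [← Finset.univ_sigma_univ, Finset.sum_sigma]
    refine Finset.sum_congr rfl fun i _ => ?_
    rw [Finset.mul_sum]
    refine Finset.sum_congr rfl fun j _ => ?_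
    simp only [Sum.elim_inl]
    ring
  · rw [Finset.mul_sum]
    refine Finset.sum_congr rfl fun r _ => ?_
    simp only [Sum.elim_inr]
    ring


/-- if `T_ℳ` is well-defined then it is weakly firmly nonexpansive with respect
to `ℳ = {M0, M1, M2}`. -/
theorem TM_weakly_firmly_nonexpansive {s m : ℕ} {n : Fin s → ℕ}
    (f : ∀ i : Fin s, (Fin (n i) → ℝ) → EReal)
    (A : ∀ i : Fin s, Matrix (Fin m) (Fin (n i)) ℝ) (b : Fin m → ℝ)
    (hf : ∀ i, ProperConvexLsc (f i))
    (α : Fin s → ℝ) (hα : ∀ i, 0 < α i) (β : ℝ) (hβ : 0 < β)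
    (M0 M1 M2 : Matrix (FIdx n m) (FIdx n m) ℝ)
    (hwd : TMWellDefined f A b α β M0 M1 M2) :
    ∀ u1 w1 z1 u2 w2 z2 : FIdx n m → ℝ,
      isTM f A b α β M0 M1 M2 u1 w1 z1 → isTM f A b α β M0 M1 M2 u2 w2 z2 →
      (z2 - z1) ⬝ᵥ M0.mulVec (z2 - z1) ≤
        (z2 - z1) ⬝ᵥ (M1.mulVec (u2 - u1) + M2.mulVec (w2 - w1)) := by
  intro u1 w1 z1 u2 w2 z2 h1 h2
  set X := Emat A α β - Rinv α β * M0 with hX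
  have h1' : isT f b α β
      (X.mulVec z1 + (Rinv α β * M1).mulVec u1 + (Rinv α β * M2).mulVec w1) z1 := h1
  have h2' : isT f b α β
      (X.mulVec z2 + (Rinv α β * M1).mulVec u2 + (Rinv α β * M2).mulVec w2) z2 := h2
  set v1 := X.mulVec z1 + (Rinv α β * M1).mulVec u1 + (Rinv α β * M2).mulVec w1 with hv1
  set v2 := X.mulVec z2 + (Rinv α β * M1).mulVec u2 + (Rinv α β * M2).mulVec w2 with hv2
  have hx : ∀ i, ((blk (xpart z2) i - blk (xpart z1) i) ⬝ᵥ
        (blk (xpart z2) i - blk (xpart z1) i))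
      ≤ (blk (xpart z2) i - blk (xpart z1) i) ⬝ᵥ (blk (xpart v2) i - blk (xpart v1) i) := by
    intro i
    have hc : 0 < α i / β := div_pos (hα i) hβ
    exact prox_firm (smulF_ne_bot hc (hf i).2.1) (smulF_conv (hf i) hc)
      (smulF_ne_top _ (hf i).2.1 (hf i).1) (h1'.1 i) (h2'.1 i)
  have hy : ((ypart z2 - ypart z1) ⬝ᵥ (ypart z2 - ypart z1))
      ≤ (ypart z2 - ypart z1) ⬝ᵥ (ypart v2 - ypart v1) :=
    prox_firm (iota_ne_bot b β) (iota_conv b β) (iota_ne_top b β) h1'.2 h2'.2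
  have key : (z2 - z1) ⬝ᵥ (Rmat α β).mulVec (z2 - z1)
      ≤ (z2 - z1) ⬝ᵥ (Rmat α β).mulVec (v2 - v1) := by
    rw [dot_R_mulVec, dot_R_mulVec]
    apply add_le_add
    · refine Finset.sum_le_sum fun i _ => ?_
      exact mul_le_mul_of_nonneg_left (hx i) (le_of_lt (div_pos hβ (hα i)))
    · exact mul_le_mul_of_nonneg_left hy (le_of_lt (by positivity))
  have hRR := RR_one (n := n) (m := m) α hα β hβ
  have hvdiff : v2 - v1 = X.mulVec (z2 - z1) + (Rinv α β * M1).mulVec (u2 - u1)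
      + (Rinv α β * M2).mulVec (w2 - w1) := by
    simp only [hv1, hv2, Matrix.mulVec_sub]
    abel
  have hRX : Rmat α β * X = SAmat A + Rmat α β - M0 := by
    rw [hX, Matrix.mul_sub, ← Matrix.mul_assoc, hRR, Matrix.one_mul]
    have h := REmat A α hα β hβ
    rw [Matrix.mul_sub, Matrix.mul_one] at h
    rw [sub_eq_iff_eq_add.mp h]
  have hRv : (Rmat α β).mulVec (v2 - v1)
      = (SAmat A).mulVec (z2 - z1) + (Rmat α β).mulVec (z2 - z1) - M0.mulVec (z2 - z1)
        + M1.mulVec (u2 - u1) + M2.mulVec (w2 - w1) := by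
    rw [hvdiff, Matrix.mulVec_add, Matrix.mulVec_add, Matrix.mulVec_mulVec,
      Matrix.mulVec_mulVec, Matrix.mulVec_mulVec, ← Matrix.mul_assoc, ← Matrix.mul_assoc,
      hRR, Matrix.one_mul, Matrix.one_mul, hRX, Matrix.sub_mulVec, Matrix.add_mulVec]
  have hskew0 : (z2 - z1) ⬝ᵥ (SAmat A).mulVec (z2 - z1) = 0 := skew_dot (SAskew A) _
  rw [hRv] at key
  simp only [dotProduct_add, dotProduct_sub] at key
  rw [hskew0] at key
  rw [dotProduct_add]
  linarith [key]

end
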